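/- Let D₊, D₋, H, S, p₀, pₙ, x form a pair of SBP operators of order q on [a,b] with D₊ nullspace consistent, and suppose D₊ does not have the eigenvalue property. Then for every ε > 0 there exists a real symmetric positive semidefinite matrix S' with S' xʲ = 0 for j = 0, …, q such that the matrix D'₊ := D₊ + (1/2) H⁻¹ S' satisfies: (i) ‖D'₊ − D₊‖ ≤ ε (in the operator norm), and (ii) every eigenvalue λ ∈ ℂ of D̃'₊ := D'₊ + H⁻¹ p₀ p₀ᵀ has Re(λ) > 0, i.e. D'₊ has the eigenvalue property. In particular, D'₊ together with D₋ − (1/2)H⁻¹S', H, S + S', p₀, pₙ, x is again a pair of SBP operators of order q on [a,b]. -/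

import Mathlib

open Matrix

section SBPAux

open Polynomial

/-- mulVec of a polynomial evaluation vector under accuracy conditions. -/
lemma sbpAux_mulVec_poly_eval {N q : ℕ} {F : Type*} [CommRing F]
    (D : Matrix (Fin N) (Fin N) F) (x : Fin N → F)
    (hD : ∀ j : ℕ, j ≤ q → D.mulVec (fun i => x i ^ j) = fun i => (j : F) * x i ^ (j - 1))
    (r : F[X]) (hr : r.natDegree ≤ q) :
    D.mulVec (fun i => r.eval (x i)) = fun i => r.derivative.eval (x i) := by
  have hlt : r.natDegree < q + 1 := Nat.lt_succ_of_le hr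
  have hrepr : (fun i => r.eval (x i))
      = ∑ j ∈ Finset.range (q+1), r.coeff j • (fun i => x i ^ j) := by
    funext i
    rw [Polynomial.eval_eq_sum_range' hlt]
    simp [Finset.sum_apply, smul_eq_mul]
  have hmv : D.mulVec (fun i => r.eval (x i))
      = ∑ j ∈ Finset.range (q+1), r.coeff j • (fun i => (j : F) * x i ^ (j - 1)) := by
    rw [hrepr, ← Matrix.mulVecLin_apply, map_sum]
    refine Finset.sum_congr rfl fun j hj => ?_
    rw [_root_.map_smul, Matrix.mulVecLin_apply, hD j (Nat.lt_succ_iff.mp (Finset.mem_range.mp hj))]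
  have hder : r.derivative = ∑ j ∈ Finset.range (q+1), Polynomial.monomial (j-1) (r.coeff j * j) := by
    conv_lhs => rw [Polynomial.as_sum_range' r (q+1) hlt]
    rw [Polynomial.derivative_sum]
    exact Finset.sum_congr rfl fun j _ => by rw [Polynomial.derivative_monomial]
  rw [hmv]
  funext i
  rw [hder]
  simp only [Polynomial.eval_finset_sum, Polynomial.eval_monomial, Finset.sum_apply,
    Pi.smul_apply, smul_eq_mul]
  exact Finset.sum_congr rfl fun j _ => by ring

/-- accuracy of order `q` on `n+1` distinct nodes forces `q ≤ n`. -/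
lemma sbpAux_q_le_n {n q : ℕ} {D : Matrix (Fin (n+1)) (Fin (n+1)) ℝ} {x : Fin (n+1) → ℝ}
    (hD : ∀ j : ℕ, j ≤ q → D.mulVec (fun i => x i ^ j) = fun i => (j : ℝ) * x i ^ (j - 1))
    (hx : Function.Injective x) : q ≤ n := by
  by_contra hqn
  push_neg at hqn
  set r : ℝ[X] := ∏ i : Fin (n+1), (X - C (x i)) with hrdef
  have hdeg : r.natDegree = n + 1 := by
    rw [hrdef, Polynomial.natDegree_prod_of_monic _ _ (fun i _ => Polynomial.monic_X_sub_C _)]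
    simp [Polynomial.natDegree_X_sub_C]
  have hrq : r.natDegree ≤ q := by omega
  have h0 : (fun i => r.eval (x i)) = (0 : Fin (n+1) → ℝ) := by
    funext i
    rw [hrdef]
    simp only [Polynomial.eval_prod]
    exact Finset.prod_eq_zero (Finset.mem_univ i) (by simp)
  have hkey := sbpAux_mulVec_poly_eval D x hD r hrq
  rw [h0, Matrix.mulVec_zero] at hkey
  have hzero : r.derivative.eval (x 0) = 0 := (congrFun hkey.symm 0)
  have hsplit : r = (X - C (x 0)) * ∏ i ∈ (Finset.univ.erase (0 : Fin (n+1))), (X - C (x i)) := by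
    rw [hrdef, ← Finset.mul_prod_erase _ _ (Finset.mem_univ (0 : Fin (n+1)))]
  have : r.derivative.eval (x 0) = ∏ i ∈ (Finset.univ.erase (0 : Fin (n+1))), (x 0 - x i) := by
    rw [hsplit, Polynomial.derivative_mul, Polynomial.derivative_X_sub_C]
    simp [Polynomial.eval_prod]
  rw [this] at hzero
  have : ∀ i ∈ (Finset.univ.erase (0 : Fin (n+1))), x 0 - x i ≠ 0 := by
    intro i hi
    have hne : i ≠ 0 := Finset.ne_of_mem_erase hi
    exact sub_ne_zero.mpr fun h => hne (hx h.symm)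
  exact Finset.prod_ne_zero_iff.mpr this hzero

/-- every subspace of `ℝ^m` is the kernel of some matrix. -/
lemma sbpAux_exists_ker_matrix {m : ℕ} (U : Submodule ℝ (Fin m → ℝ)) :
    ∃ (d : ℕ) (A : Matrix (Fin d) (Fin m) ℝ), ∀ v, (A.mulVec v = 0 ↔ v ∈ U) := by
  set QS := (Fin m → ℝ) ⧸ U
  set d := Module.finrank ℝ QS with hd
  let B : Module.Basis (Fin d) ℝ QS := Module.finBasis ℝ QS
  let L : (Fin m → ℝ) →ₗ[ℝ] (Fin d → ℝ) := B.equivFun.toLinearMap ∘ₗ U.mkQ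
  refine ⟨d, Matrix.of fun k i => L (Pi.single i 1) k, fun v => ?_⟩
  have hAmul : (Matrix.of fun k i => L (Pi.single i 1) k).mulVec v = L v := by
    funext k
    have hv : ∑ i, v i • (Pi.single i (1:ℝ) : Fin m → ℝ) = v := by
      funext j
      simp [Pi.single_apply]
    calc ((Matrix.of fun k i => L (Pi.single i 1) k).mulVec v) k
        = ∑ i, v i * L (Pi.single i 1) k := by
          simp [Matrix.mulVec, dotProduct, mul_comm]
      _ = L v k := by
          conv_rhs => rw [← hv]
          rw [map_sum]
          simp [Finset.sum_apply]
  rw [hAmul]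
  constructor
  · intro h
    have h2 : B.equivFun (U.mkQ v) = 0 := h
    have h3 : U.mkQ v = 0 := B.equivFun.map_eq_zero_iff.mp h2
    rwa [Submodule.mkQ_apply, Submodule.Quotient.mk_eq_zero] at h3
  · intro h
    have h3 : U.mkQ v = 0 := by
      rw [Submodule.mkQ_apply, Submodule.Quotient.mk_eq_zero]; exact h
    show B.equivFun (U.mkQ v) = 0
    rw [h3, map_zero]

variable {k m : ℕ}

/-- mapping a real matrix--vector product to ℂ. -/
lemma sbpAux_map_mulVec_real (M : Matrix (Fin k) (Fin m) ℝ) (v : Fin m → ℝ) :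
    (M.map (fun r : ℝ => (r : ℂ))).mulVec (fun i => (v i : ℂ))
      = fun i => ((M.mulVec v i : ℝ) : ℂ) := by
  funext i
  have := (RingHom.map_mulVec Complex.ofRealHom M v i).symm
  simpa [Function.comp_def, Complex.ofRealHom] using this

lemma sbpAux_mulVec_re (M : Matrix (Fin k) (Fin m) ℝ) (w : Fin m → ℂ) (i : Fin k) :
    (((M.map (fun r : ℝ => (r : ℂ))).mulVec w) i).re
      = (M.mulVec (fun j => (w j).re)) i := by
  simp [Matrix.mulVec, dotProduct, Complex.re_sum, Complex.mul_re]

lemma sbpAux_mulVec_im (M : Matrix (Fin k) (Fin m) ℝ) (w : Fin m → ℂ) (i : Fin k) :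
    (((M.map (fun r : ℝ => (r : ℂ))).mulVec w) i).im
      = (M.mulVec (fun j => (w j).im)) i := by
  simp [Matrix.mulVec, dotProduct, Complex.im_sum, Complex.mul_im]

lemma sbpAux_mapC_mulVec_eq_zero_iff (M : Matrix (Fin k) (Fin m) ℝ) (w : Fin m → ℂ) :
    (M.map (fun r : ℝ => (r : ℂ))).mulVec w = 0
      ↔ M.mulVec (fun j => (w j).re) = 0 ∧ M.mulVec (fun j => (w j).im) = 0 := by
  constructor
  · intro h
    constructor <;> funext i
    · rw [← sbpAux_mulVec_re M w i, h]; simp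
    · rw [← sbpAux_mulVec_im M w i, h]; simp
  · rintro ⟨h1, h2⟩
    funext i
    have e1 := sbpAux_mulVec_re M w i
    have e2 := sbpAux_mulVec_im M w i
    rw [h1] at e1; rw [h2] at e2
    exact Complex.ext (by simpa using e1) (by simpa using e2)

/-- real part of the complex quadratic form of a mapped real matrix. -/
lemma sbpAux_re_quad (M : Matrix (Fin m) (Fin m) ℝ) (w : Fin m → ℂ) :
    (star w ⬝ᵥ (M.map (fun r : ℝ => (r : ℂ))).mulVec w).re
      = (fun j => (w j).re) ⬝ᵥ M.mulVec (fun j => (w j).re)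
        + (fun j => (w j).im) ⬝ᵥ M.mulVec (fun j => (w j).im) := by
  simp only [dotProduct, Complex.re_sum, Pi.star_apply, Complex.star_def, Complex.mul_re,
    Complex.conj_re, Complex.conj_im]
  rw [← Finset.sum_add_distrib]
  refine Finset.sum_congr rfl fun i _ => ?_
  have hre := sbpAux_mulVec_re M w i
  have him := sbpAux_mulVec_im M w i
  simp only [Matrix.mulVec, dotProduct] at hre him ⊢
  rw [hre, him]; ring

lemma sbpAux_map_mul {a b c : ℕ} (X : Matrix (Fin a) (Fin b) ℝ) (Y : Matrix (Fin b) (Fin c) ℝ) :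
    (X * Y).map (fun r : ℝ => (r : ℂ))
      = X.map (fun r : ℝ => (r : ℂ)) * Y.map (fun r : ℝ => (r : ℂ)) := by
  ext i j
  simp [Matrix.mul_apply]

lemma sbpAux_map_add (X Y : Matrix (Fin k) (Fin m) ℝ) :
    (X + Y).map (fun r : ℝ => (r : ℂ))
      = X.map (fun r : ℝ => (r : ℂ)) + Y.map (fun r : ℝ => (r : ℂ)) := by
  ext i j; simp

lemma sbpAux_map_smul (r : ℝ) (X : Matrix (Fin k) (Fin m) ℝ) :
    (r • X).map (fun r : ℝ => (r : ℂ)) = (r : ℂ) • X.map (fun r : ℝ => (r : ℂ)) := by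
  ext i j; simp

lemma sbpAux_vecMulVec_mapC (p : Fin m → ℝ) (w : Fin m → ℂ) :
    ((vecMulVec p p).map (fun r : ℝ => (r : ℂ))).mulVec w
      = ((fun i => (p i : ℂ)) ⬝ᵥ w) • (fun i => (p i : ℂ)) := by
  funext i
  simp only [Matrix.mulVec, dotProduct, Matrix.map_apply, Matrix.vecMulVec_apply,
    Pi.smul_apply, smul_eq_mul, Finset.sum_mul]
  refine Finset.sum_congr rfl fun j _ => ?_
  push_cast
  ring

end SBPAux

/-- A pair of SBP operators of order `q` on `[a,b]`:
(A) accuracy conditions, (B) `H` symmetric positive definite,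
(C) `H D₊ + D₊ᵀ H = -p₀ p₀ᵀ + pₙ pₙᵀ + S` with `S` symmetric positive semidefinite,
(D) `H D₊ + D₋ᵀ H = -p₀ p₀ᵀ + pₙ pₙᵀ`, (E) the grid points are pairwise distinct. -/
def IsSBP (n q : ℕ) (a b : ℝ)
    (Dp Dm H S : Matrix (Fin (n+1)) (Fin (n+1)) ℝ)
    (p0 pn x : Fin (n+1) → ℝ) : Prop :=
  (∀ j : ℕ, j ≤ q → Dp.mulVec (fun i => x i ^ j) = fun i => (j : ℝ) * x i ^ (j - 1)) ∧
  (∀ j : ℕ, j ≤ q → Dm.mulVec (fun i => x i ^ j) = fun i => (j : ℝ) * x i ^ (j - 1)) ∧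
  (∀ j : ℕ, j ≤ q → p0 ⬝ᵥ (fun i => x i ^ j) = a ^ j) ∧
  (∀ j : ℕ, j ≤ q → pn ⬝ᵥ (fun i => x i ^ j) = b ^ j) ∧
  H.PosDef ∧ S.PosSemidef ∧
  H * Dp + Dpᵀ * H = -(vecMulVec p0 p0) + vecMulVec pn pn + S ∧
  H * Dp + Dmᵀ * H = -(vecMulVec p0 p0) + vecMulVec pn pn ∧
  Function.Injective x

open scoped Matrix.Norms.L2Operator in
/-- a nullspace consistent SBP operator lacking the eigenvalue property can be
perturbed by an arbitrarily small dissipation term `(1/2)H⁻¹S'` so that the perturbed operator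
is again an SBP operator of order `q` and has the eigenvalue property. -/
theorem sbp_perturbation_restores_eigenvalue_property {n q : ℕ} (hn : 1 ≤ n) (hq : 1 ≤ q)
    {a b : ℝ} (hab : a < b)
    (Dp Dm H S : Matrix (Fin (n+1)) (Fin (n+1)) ℝ) (p0 pn x : Fin (n+1) → ℝ)
    (hsbp : IsSBP n q a b Dp Dm H S p0 pn x)
    (hnull : LinearMap.ker Dp.mulVecLin = Submodule.span ℝ {(fun _ => 1 : Fin (n+1) → ℝ)})
    (hbad : ¬ (∀ (lam : ℂ) (w : Fin (n+1) → ℂ), w ≠ 0 →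
      ((Dp + H⁻¹ * vecMulVec p0 p0).map (fun r => (r : ℂ))).mulVec w = lam • w →
      0 < lam.re)) :
    ∀ ε : ℝ, 0 < ε → ∃ S' : Matrix (Fin (n+1)) (Fin (n+1)) ℝ,
      S'.PosSemidef ∧
      (∀ j : ℕ, j ≤ q → S'.mulVec (fun i => x i ^ j) = 0) ∧
      ‖(Dp + (2 : ℝ)⁻¹ • (H⁻¹ * S')) - Dp‖ ≤ ε ∧
      (∀ (lam : ℂ) (w : Fin (n+1) → ℂ), w ≠ 0 →
        (((Dp + (2 : ℝ)⁻¹ • (H⁻¹ * S')) + H⁻¹ * vecMulVec p0 p0).map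
          (fun r => (r : ℂ))).mulVec w = lam • w →
        0 < lam.re) ∧
      IsSBP n q a b (Dp + (2 : ℝ)⁻¹ • (H⁻¹ * S')) (Dm - (2 : ℝ)⁻¹ • (H⁻¹ * S'))
        H (S + S') p0 pn x := by
  intro ε hε
  obtain ⟨hA1, hA2, hA3, hA4, hH, hS, hC, hD2, hx⟩ := hsbp
  have hqn : q ≤ n := sbpAux_q_le_n hA1 hx
  obtain ⟨d, A, hker⟩ := sbpAux_exists_ker_matrix
    (Submodule.span ℝ (Set.range fun j : Fin (q+1) => fun i : Fin (n+1) => x i ^ (j : ℕ)))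
  set P : Matrix (Fin (n+1)) (Fin (n+1)) ℝ := Aᵀ * A with hP
  have hxj : ∀ j : ℕ, j ≤ q → A.mulVec (fun i => x i ^ j) = 0 := by
    intro j hj
    rw [hker]
    exact Submodule.subset_span ⟨⟨j, Nat.lt_succ_of_le hj⟩, rfl⟩
  have hPxj : ∀ j : ℕ, j ≤ q → P.mulVec (fun i => x i ^ j) = 0 := by
    intro j hj
    rw [hP, ← Matrix.mulVec_mulVec, hxj j hj, Matrix.mulVec_zero]
  have hPpsd : P.PosSemidef := by
    have := Matrix.posSemidef_conjTranspose_mul_self A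
    rwa [Matrix.conjTranspose_eq_transpose_of_trivial] at this
  set δ : ℝ := ε / (1 + ‖H⁻¹ * P‖) with hδ
  have hnn : (0:ℝ) ≤ ‖H⁻¹ * P‖ := norm_nonneg _
  have hδpos : 0 < δ := div_pos hε (by linarith)
  have hδε : δ * (1 + ‖H⁻¹ * P‖) = ε := div_mul_cancel₀ ε (by linarith)
  clear_value δ
  clear_value P
  -- basic matrix facts
  have hdetH : IsUnit H.det := hH.det_pos.ne'.isUnit
  have hHinv : H * H⁻¹ = 1 := Matrix.mul_nonsing_inv H hdetH
  have hinvH : H⁻¹ * H = 1 := Matrix.nonsing_inv_mul H hdetH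
  have hHsym : Hᵀ = H := by
    have := hH.isHermitian
    rwa [Matrix.IsHermitian, Matrix.conjTranspose_eq_transpose_of_trivial] at this
  have hinvsym : (H⁻¹)ᵀ = H⁻¹ := by rw [Matrix.transpose_nonsing_inv, hHsym]
  have hPsymT : Pᵀ = P := by rw [hP, Matrix.transpose_mul, Matrix.transpose_transpose]
  have hS'T : (δ • P)ᵀ = δ • P := by rw [Matrix.transpose_smul, hPsymT]
  have hS'psd : (δ • P).PosSemidef := by
    refine Matrix.PosSemidef.of_dotProduct_mulVec_nonneg ?_ fun v => ?_
    · show (δ • P)ᴴ = δ • P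
      rw [Matrix.conjTranspose_smul, hPpsd.1]
      simp
    · rw [Matrix.smul_mulVec, dotProduct_smul, smul_eq_mul]
      exact mul_nonneg hδpos.le (hPpsd.dotProduct_mulVec_nonneg v)
  have hS'xj : ∀ j : ℕ, j ≤ q → (δ • P).mulVec (fun i => x i ^ j) = 0 := by
    intro j hj
    rw [Matrix.smul_mulVec, hPxj j hj, smul_zero]
  have hacc' : ∀ j : ℕ, j ≤ q →
      (Dp + (2 : ℝ)⁻¹ • (H⁻¹ * (δ • P))).mulVec (fun i => x i ^ j)
        = fun i => (j : ℝ) * x i ^ (j - 1) := by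
    intro j hj
    rw [Matrix.add_mulVec, Matrix.smul_mulVec, ← Matrix.mulVec_mulVec, hS'xj j hj,
      Matrix.mulVec_zero, smul_zero, hA1 j hj]
    funext i; simp
  have haccm' : ∀ j : ℕ, j ≤ q →
      (Dm - (2 : ℝ)⁻¹ • (H⁻¹ * (δ • P))).mulVec (fun i => x i ^ j)
        = fun i => (j : ℝ) * x i ^ (j - 1) := by
    intro j hj
    rw [Matrix.sub_mulVec, Matrix.smul_mulVec, ← Matrix.mulVec_mulVec, hS'xj j hj,
      Matrix.mulVec_zero, smul_zero, hA2 j hj]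
    funext i; simp
  refine ⟨δ • P, hS'psd, hS'xj, ?_, ?_, hacc', haccm', hA3, hA4, hH, hS.add hS'psd, ?_, ?_, hx⟩
  · -- norm bound
    have h1 : H⁻¹ * (δ • P) = δ • (H⁻¹ * P) := Matrix.mul_smul _ _ _
    rw [add_sub_cancel_left, h1, smul_smul, norm_smul]
    have habs : ‖(2 : ℝ)⁻¹ * δ‖ = 2⁻¹ * δ := abs_of_pos (by positivity)
    rw [habs]
    nlinarith [hnn, hδpos, hδε]
  · -- eigenvalue property
    intro lam w hw0 heig
    by_contra hcon
    push_neg at hcon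
    set M : Matrix (Fin (n+1)) (Fin (n+1)) ℝ :=
      (Dp + (2:ℝ)⁻¹ • (H⁻¹ * (δ • P))) + H⁻¹ * vecMulVec p0 p0 with hMdef
    clear_value M
    have hvT : (vecMulVec p0 p0)ᵀ = vecMulVec p0 p0 := by
      ext i j; simp [Matrix.transpose_apply, Matrix.vecMulVec_apply, mul_comm]
    have e1 : H * (H⁻¹ * (δ • P)) = δ • P := by
      rw [← Matrix.mul_assoc, hHinv, Matrix.one_mul]
    have e2 : (H⁻¹ * (δ • P))ᵀ * H = δ • P := by
      rw [Matrix.transpose_mul, hinvsym, hS'T, Matrix.mul_assoc, hinvH, Matrix.mul_one]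
    have e3 : H * (H⁻¹ * vecMulVec p0 p0) = vecMulVec p0 p0 := by
      rw [← Matrix.mul_assoc, hHinv, Matrix.one_mul]
    have e4 : (H⁻¹ * vecMulVec p0 p0)ᵀ * H = vecMulVec p0 p0 := by
      rw [Matrix.transpose_mul, hinvsym, hvT, Matrix.mul_assoc, hinvH, Matrix.mul_one]
    have hhalf : (2:ℝ)⁻¹ • (δ • P) + (2:ℝ)⁻¹ • (δ • P) = δ • P := by
      rw [← add_smul]; norm_num
    have hKey : H * M + Mᵀ * H = vecMulVec p0 p0 + vecMulVec pn pn + S + δ • P := by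
      calc H * M + Mᵀ * H
          = (H * Dp + Dpᵀ * H) + ((2:ℝ)⁻¹ • (δ • P) + (2:ℝ)⁻¹ • (δ • P))
            + (vecMulVec p0 p0 + vecMulVec p0 p0) := by
            rw [hMdef, Matrix.mul_add, Matrix.mul_add, Matrix.transpose_add,
              Matrix.transpose_add, Matrix.add_mul, Matrix.add_mul, Matrix.transpose_smul,
              Matrix.mul_smul, Matrix.smul_mul, e1, e2, e3, e4]
            abel
        _ = vecMulVec p0 p0 + vecMulVec pn pn + S + δ • P := by
            rw [hC, hhalf]; abel
    have hKeyC : H.map (fun r : ℝ => (r : ℂ)) * M.map (fun r : ℝ => (r : ℂ))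
        + Mᵀ.map (fun r : ℝ => (r : ℂ)) * H.map (fun r : ℝ => (r : ℂ))
        = (vecMulVec p0 p0).map (fun r : ℝ => (r : ℂ))
          + (vecMulVec pn pn).map (fun r : ℝ => (r : ℂ))
          + S.map (fun r : ℝ => (r : ℂ)) + (δ • P).map (fun r : ℝ => (r : ℂ)) := by
      calc H.map (fun r : ℝ => (r : ℂ)) * M.map (fun r : ℝ => (r : ℂ))
          + Mᵀ.map (fun r : ℝ => (r : ℂ)) * H.map (fun r : ℝ => (r : ℂ))
          = (H * M + Mᵀ * H).map (fun r : ℝ => (r : ℂ)) := by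
            rw [← sbpAux_map_mul H M, ← sbpAux_map_mul Mᵀ H, ← sbpAux_map_add (H * M) (Mᵀ * H)]
        _ = (vecMulVec p0 p0 + vecMulVec pn pn + S + δ • P).map (fun r : ℝ => (r : ℂ)) := by
            rw [hKey]
        _ = _ := by
            rw [sbpAux_map_add (vecMulVec p0 p0 + vecMulVec pn pn + S) (δ • P),
              sbpAux_map_add (vecMulVec p0 p0 + vecMulVec pn pn) S,
              sbpAux_map_add (vecMulVec p0 p0) (vecMulVec pn pn)]
    -- quadratic form computations
    have hterm1 : star w ⬝ᵥ ((H.map (fun r : ℝ => (r : ℂ)) * M.map (fun r : ℝ => (r : ℂ))).mulVec w)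
        = lam * (star w ⬝ᵥ (H.map (fun r : ℝ => (r : ℂ))).mulVec w) := by
      rw [← Matrix.mulVec_mulVec, heig, Matrix.mulVec_smul, dotProduct_smul, smul_eq_mul]
    have hMH : Mᵀ.map (fun r : ℝ => (r : ℂ)) = (M.map (fun r : ℝ => (r : ℂ)))ᴴ := by
      ext i j
      simp [Matrix.conjTranspose_apply, Matrix.map_apply, Complex.conj_ofReal]
    have hterm2 : star w ⬝ᵥ ((Mᵀ.map (fun r : ℝ => (r : ℂ)) * H.map (fun r : ℝ => (r : ℂ))).mulVec w)
        = (starRingEnd ℂ) lam * (star w ⬝ᵥ (H.map (fun r : ℝ => (r : ℂ))).mulVec w) := by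
      rw [← Matrix.mulVec_mulVec, dotProduct_mulVec, hMH, ← Matrix.star_mulVec, heig,
        star_smul, smul_dotProduct]
      simp [smul_eq_mul]
    have hcomb := congrArg (fun X : Matrix (Fin (n+1)) (Fin (n+1)) ℂ => star w ⬝ᵥ X.mulVec w) hKeyC
    simp only [Matrix.add_mulVec, dotProduct_add] at hcomb
    rw [hterm1, hterm2, ← add_mul, Complex.add_conj] at hcomb
    -- first p0 term
    have hsw0 : star w ⬝ᵥ (fun i => (p0 i : ℂ)) = (starRingEnd ℂ) ((fun i => (p0 i : ℂ)) ⬝ᵥ w) := by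
      simp [dotProduct, map_sum, Complex.conj_ofReal, mul_comm]
    have ht0 : star w ⬝ᵥ (((vecMulVec p0 p0).map (fun r : ℝ => (r : ℂ))).mulVec w)
        = ((Complex.normSq ((fun i => (p0 i : ℂ)) ⬝ᵥ w) : ℝ) : ℂ) := by
      rw [sbpAux_vecMulVec_mapC, dotProduct_smul, smul_eq_mul, hsw0, Complex.mul_conj]
    have hswn : star w ⬝ᵥ (fun i => (pn i : ℂ)) = (starRingEnd ℂ) ((fun i => (pn i : ℂ)) ⬝ᵥ w) := by
      simp [dotProduct, map_sum, Complex.conj_ofReal, mul_comm]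
    have htn : star w ⬝ᵥ (((vecMulVec pn pn).map (fun r : ℝ => (r : ℂ))).mulVec w)
        = ((Complex.normSq ((fun i => (pn i : ℂ)) ⬝ᵥ w) : ℝ) : ℂ) := by
      rw [sbpAux_vecMulVec_mapC, dotProduct_smul, smul_eq_mul, hswn, Complex.mul_conj]
    -- S' term
    have hPC : P.map (fun r : ℝ => (r : ℂ))
        = (A.map (fun r : ℝ => (r : ℂ)))ᴴ * (A.map (fun r : ℝ => (r : ℂ))) := by
      rw [hP, sbpAux_map_mul]
      congr 1
      ext i j
      simp [Matrix.conjTranspose_apply, Matrix.map_apply, Complex.conj_ofReal]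
    have htS' : star w ⬝ᵥ (((δ • P).map (fun r : ℝ => (r : ℂ))).mulVec w)
        = ((δ * ∑ i, Complex.normSq ((A.map (fun r : ℝ => (r : ℂ))).mulVec w i) : ℝ) : ℂ) := by
      have hyform : star ((A.map (fun r : ℝ => (r : ℂ))).mulVec w)
            ⬝ᵥ ((A.map (fun r : ℝ => (r : ℂ))).mulVec w)
          = ((∑ i, Complex.normSq ((A.map (fun r : ℝ => (r : ℂ))).mulVec w i) : ℝ) : ℂ) := by
        push_cast
        simp only [dotProduct, Pi.star_apply]
        exact Finset.sum_congr rfl fun i _ => (Complex.normSq_eq_conj_mul_self).symm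
      rw [sbpAux_map_smul, Matrix.smul_mulVec, dotProduct_smul, smul_eq_mul, hPC,
        ← Matrix.mulVec_mulVec, dotProduct_mulVec, ← Matrix.star_mulVec, hyform,
        ← Complex.ofReal_mul]
    rw [ht0, htn, htS'] at hcomb
    -- take real parts
    have hre := congrArg Complex.re hcomb
    simp only [Complex.add_re, Complex.ofReal_re, Complex.re_ofReal_mul] at hre
    -- positivity of the H quadratic form
    have hQre : (star w ⬝ᵥ (H.map (fun r : ℝ => (r : ℂ))).mulVec w).re
        = (fun j => (w j).re) ⬝ᵥ H.mulVec (fun j => (w j).re)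
          + (fun j => (w j).im) ⬝ᵥ H.mulVec (fun j => (w j).im) := sbpAux_re_quad H w
    have hstar : ∀ z : Fin (n+1) → ℝ, star z = z := fun z => funext fun i => rfl
    have hQpos : 0 < (star w ⬝ᵥ (H.map (fun r : ℝ => (r : ℂ))).mulVec w).re := by
      rw [hQre]
      have hne : (fun j => (w j).re) ≠ 0 ∨ (fun j => (w j).im) ≠ 0 := by
        by_contra hcc
        push_neg at hcc
        apply hw0
        funext i
        exact Complex.ext (by simpa using congrFun hcc.1 i) (by simpa using congrFun hcc.2 i)
      rcases hne with hne | hne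
      · have h1 := hH.dotProduct_mulVec_pos hne
        have h2 := hH.posSemidef.dotProduct_mulVec_nonneg (fun j => (w j).im)
        rw [hstar] at h1 h2
        linarith
      · have h1 := hH.dotProduct_mulVec_pos hne
        have h2 := hH.posSemidef.dotProduct_mulVec_nonneg (fun j => (w j).re)
        rw [hstar] at h1 h2
        linarith
    have hSre : 0 ≤ (star w ⬝ᵥ (S.map (fun r : ℝ => (r : ℂ))).mulVec w).re := by
      rw [sbpAux_re_quad]
      have h1 := hS.dotProduct_mulVec_nonneg (fun j => (w j).re)
      have h2 := hS.dotProduct_mulVec_nonneg (fun j => (w j).im)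
      rw [hstar] at h1 h2
      linarith
    have hn0 : 0 ≤ Complex.normSq ((fun i => (p0 i : ℂ)) ⬝ᵥ w) := Complex.normSq_nonneg _
    have hnn' : 0 ≤ Complex.normSq ((fun i => (pn i : ℂ)) ⬝ᵥ w) := Complex.normSq_nonneg _
    have hsumnn : 0 ≤ ∑ i, Complex.normSq ((A.map (fun r : ℝ => (r : ℂ))).mulVec w i) :=
      Finset.sum_nonneg fun i _ => Complex.normSq_nonneg _
    have hlhs : 2 * lam.re * (star w ⬝ᵥ (H.map (fun r : ℝ => (r : ℂ))).mulVec w).re ≤ 0 := by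
      have h2l : 2 * lam.re ≤ 0 := by linarith
      exact mul_nonpos_iff.mpr (Or.inr ⟨h2l, hQpos.le⟩)
    have hdltS : 0 ≤ δ * ∑ i, Complex.normSq ((A.map (fun r : ℝ => (r : ℂ))).mulVec w i) :=
      mul_nonneg hδpos.le hsumnn
    have hz00 : Complex.normSq ((fun i => (p0 i : ℂ)) ⬝ᵥ w) = 0 := by
      linarith [hre, hlhs, hn0, hnn', hSre, hdltS]
    have hyS0 : δ * ∑ i, Complex.normSq ((A.map (fun r : ℝ => (r : ℂ))).mulVec w i) = 0 := by
      linarith [hre, hlhs, hn0, hnn', hSre, hdltS]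
    have hy00 : ∑ i, Complex.normSq ((A.map (fun r : ℝ => (r : ℂ))).mulVec w i) = 0 := by
      rcases mul_eq_zero.mp hyS0 with h | h
      · exact absurd h hδpos.ne'
      · exact h
    have hz0eq : (fun i => (p0 i : ℂ)) ⬝ᵥ w = 0 := by
      rwa [Complex.normSq_eq_zero] at hz00
    have hyeq : (A.map (fun r : ℝ => (r : ℂ))).mulVec w = 0 := by
      funext i
      have := (Finset.sum_eq_zero_iff_of_nonneg
        (fun i _ => Complex.normSq_nonneg ((A.map (fun r : ℝ => (r : ℂ))).mulVec w i))).mp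
        hy00 i (Finset.mem_univ i)
      exact Complex.normSq_eq_zero.mp this
    -- reduce the eigenvalue equation to Dp
    have hterm2z : ((H⁻¹ * (δ • P)).map (fun r : ℝ => (r : ℂ))).mulVec w = 0 := by
      rw [sbpAux_map_mul, ← Matrix.mulVec_mulVec, sbpAux_map_smul, Matrix.smul_mulVec,
        hPC, ← Matrix.mulVec_mulVec, hyeq, Matrix.mulVec_zero, smul_zero, Matrix.mulVec_zero]
    have hterm3z : ((H⁻¹ * vecMulVec p0 p0).map (fun r : ℝ => (r : ℂ))).mulVec w = 0 := by
      rw [sbpAux_map_mul, ← Matrix.mulVec_mulVec, sbpAux_vecMulVec_mapC, hz0eq, zero_smul,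
        Matrix.mulVec_zero]
    have heigDp : (Dp.map (fun r : ℝ => (r : ℂ))).mulVec w = lam • w := by
      have hMexp : (M.map (fun r : ℝ => (r : ℂ))).mulVec w
          = (Dp.map (fun r : ℝ => (r : ℂ))).mulVec w
            + ((2:ℝ)⁻¹ : ℂ) • (((H⁻¹ * (δ • P)).map (fun r : ℝ => (r : ℂ))).mulVec w)
            + (((H⁻¹ * vecMulVec p0 p0).map (fun r : ℝ => (r : ℂ))).mulVec w) := by
        rw [hMdef, sbpAux_map_add (Dp + (2:ℝ)⁻¹ • (H⁻¹ * (δ • P))) (H⁻¹ * vecMulVec p0 p0),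
          sbpAux_map_add Dp ((2:ℝ)⁻¹ • (H⁻¹ * (δ • P))), sbpAux_map_smul,
          Matrix.add_mulVec, Matrix.add_mulVec, Matrix.smul_mulVec]
        norm_cast
      rw [hMexp, hterm2z, hterm3z, smul_zero, add_zero, add_zero] at heig
      exact heig
    -- membership of real and imaginary parts in the span
    obtain ⟨hAu, hAv⟩ := (sbpAux_mapC_mulVec_eq_zero_iff A w).mp hyeq
    have hu : (fun j => (w j).re) ∈ Submodule.span ℝ
        (Set.range fun j : Fin (q+1) => fun i : Fin (n+1) => x i ^ (j : ℕ)) := (hker _).mp hAu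
    have hv : (fun j => (w j).im) ∈ Submodule.span ℝ
        (Set.range fun j : Fin (q+1) => fun i : Fin (n+1) => x i ^ (j : ℕ)) := (hker _).mp hAv
    rcases eq_or_ne lam 0 with h0lam | h0lam
    · -- lam = 0 : contradiction with nullspace consistency
      rw [h0lam, zero_smul] at heigDp
      obtain ⟨hDu, hDv⟩ := (sbpAux_mapC_mulVec_eq_zero_iff Dp w).mp heigDp
      have hu1 : (fun j => (w j).re) ∈ Submodule.span ℝ {(fun _ => 1 : Fin (n+1) → ℝ)} := by
        rw [← hnull]
        exact LinearMap.mem_ker.mpr (by rw [Matrix.mulVecLin_apply]; exact hDu)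
      have hv1 : (fun j => (w j).im) ∈ Submodule.span ℝ {(fun _ => 1 : Fin (n+1) → ℝ)} := by
        rw [← hnull]
        exact LinearMap.mem_ker.mpr (by rw [Matrix.mulVecLin_apply]; exact hDv)
      obtain ⟨α, hα⟩ := Submodule.mem_span_singleton.mp hu1
      obtain ⟨β, hβ⟩ := Submodule.mem_span_singleton.mp hv1
      have hwi : ∀ i, w i = (α : ℂ) + (β : ℂ) * Complex.I := by
        intro i
        have h1 : (w i).re = α := by
          have := congrFun hα i
          simpa using this.symm
        have h2 : (w i).im = β := by
          have := congrFun hβ i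
          simpa using this.symm
        apply Complex.ext <;> simp [h1, h2]
      have hp01 : ∑ i, p0 i = 1 := by
        simpa [dotProduct] using hA3 0 (Nat.zero_le q)
      have hsum : (fun i => (p0 i : ℂ)) ⬝ᵥ w = (α : ℂ) + (β : ℂ) * Complex.I := by
        calc (fun i => (p0 i : ℂ)) ⬝ᵥ w
            = ∑ i, (p0 i : ℂ) * ((α : ℂ) + (β : ℂ) * Complex.I) := by
              simp only [dotProduct]
              exact Finset.sum_congr rfl fun i _ => by rw [hwi i]
          _ = ((∑ i, p0 i : ℝ) : ℂ) * ((α : ℂ) + (β : ℂ) * Complex.I) := by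
              rw [← Finset.sum_mul]
              norm_cast
          _ = (α : ℂ) + (β : ℂ) * Complex.I := by rw [hp01]; simp
      rw [hz0eq] at hsum
      have hαβ : α = 0 ∧ β = 0 := by
        have h := hsum.symm
        rw [Complex.ext_iff] at h
        simpa using h
      apply hw0
      funext i
      rw [hwi i, hαβ.1, hαβ.2]
      simp
    · -- lam ≠ 0 : polynomial argument
      obtain ⟨cu, hcu⟩ := (Submodule.mem_span_range_iff_exists_fun ℝ).mp hu
      obtain ⟨cv, hcv⟩ := (Submodule.mem_span_range_iff_exists_fun ℝ).mp hv
      set p : Polynomial ℂ := ∑ j : Fin (q+1),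
        Polynomial.C ((cu j : ℂ) + (cv j : ℂ) * Complex.I) * Polynomial.X ^ (j : ℕ) with hpdef
      have hwp : ∀ i, w i = p.eval ((x i : ℂ)) := by
        intro i
        have hui : (w i).re = ∑ j : Fin (q+1), cu j * x i ^ (j : ℕ) := by
          have := congrFun hcu i
          simp only [Finset.sum_apply, Pi.smul_apply, smul_eq_mul] at this
          exact this.symm
        have hvi : (w i).im = ∑ j : Fin (q+1), cv j * x i ^ (j : ℕ) := by
          have := congrFun hcv i
          simp only [Finset.sum_apply, Pi.smul_apply, smul_eq_mul] at this
          exact this.symm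
        have heval : p.eval ((x i : ℂ))
            = ∑ j : Fin (q+1), ((cu j : ℂ) + (cv j : ℂ) * Complex.I) * (x i : ℂ) ^ (j : ℕ) := by
          rw [hpdef]
          simp [Polynomial.eval_finset_sum]
        rw [heval]
        calc w i = ((w i).re : ℂ) + ((w i).im : ℂ) * Complex.I := (Complex.re_add_im (w i)).symm
          _ = ∑ j : Fin (q+1), ((cu j : ℂ) + (cv j : ℂ) * Complex.I) * (x i : ℂ) ^ (j : ℕ) := by
              rw [hui, hvi]
              push_cast
              rw [Finset.sum_mul, ← Finset.sum_add_distrib]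
              exact Finset.sum_congr rfl fun j _ => by ring
      have hpdeg : p.natDegree ≤ q := by
        rw [hpdef]
        refine Polynomial.natDegree_sum_le_of_forall_le _ _ fun j _ => ?_
        refine le_trans (Polynomial.natDegree_C_mul_le _ _) ?_
        rw [Polynomial.natDegree_X_pow]
        exact Fin.is_le j
      have hA1C : ∀ j : ℕ, j ≤ q →
          (Dp.map (fun r : ℝ => (r : ℂ))).mulVec (fun i => ((x i : ℂ)) ^ j)
            = fun i => (j : ℂ) * ((x i : ℂ)) ^ (j - 1) := by
        intro j hj
        have hmv := sbpAux_map_mulVec_real Dp (fun i => x i ^ j)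
        rw [hA1 j hj] at hmv
        have hl : (fun i => ((x i ^ j : ℝ) : ℂ)) = fun i => ((x i : ℂ)) ^ j := by
          funext i; push_cast; ring
        rw [hl] at hmv
        rw [hmv]
        funext i
        push_cast
        ring
      have hkeyP := sbpAux_mulVec_poly_eval (Dp.map (fun r : ℝ => (r : ℂ)))
        (fun i => (x i : ℂ)) hA1C p hpdeg
      have hwvec : (fun i => p.eval ((x i : ℂ))) = w := funext fun i => (hwp i).symm
      rw [hwvec, heigDp] at hkeyP
      set h2 : Polynomial ℂ := Polynomial.derivative p - Polynomial.C lam * p with hh2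
      have hzero : ∀ i, h2.eval ((x i : ℂ)) = 0 := by
        intro i
        have := congrFun hkeyP i
        simp only [Pi.smul_apply, smul_eq_mul] at this
        rw [hh2]
        simp only [Polynomial.eval_sub, Polynomial.eval_mul, Polynomial.eval_C]
        rw [← this, hwp i]
        ring
      have hxcinj : Function.Injective (fun i => ((x i : ℂ))) := by
        intro i j hij
        have hxx : (x i : ℂ) = (x j : ℂ) := hij
        exact hx (by exact_mod_cast hxx)
      have h2deg : h2.natDegree < Fintype.card (Fin (n+1)) := by
        have hle : h2.natDegree ≤ q := by
          rw [hh2]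
          refine le_trans (Polynomial.natDegree_sub_le _ _) (max_le ?_ ?_)
          · exact le_trans (Polynomial.natDegree_derivative_le p) (by omega)
          · exact le_trans (Polynomial.natDegree_C_mul_le _ _) hpdeg
        rw [Fintype.card_fin]
        omega
      have h20 : h2 = 0 :=
        Polynomial.eq_zero_of_natDegree_lt_card_of_eval_eq_zero h2 hxcinj hzero h2deg
      have hdp : Polynomial.derivative p = Polynomial.C lam * p := by
        have := h20
        rw [hh2, sub_eq_zero] at this
        exact this
      have hp0 : p = 0 := by
        by_contra hp
        rcases Nat.eq_zero_or_pos p.natDegree with hd0 | hdpos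
        · have hpc := Polynomial.eq_C_of_natDegree_eq_zero hd0
          rw [hpc, Polynomial.derivative_C, ← Polynomial.C_mul] at hdp
          have : lam * p.coeff 0 = 0 := by
            have := hdp.symm
            rwa [Polynomial.C_eq_zero] at this
          have hc0 : p.coeff 0 = 0 := by
            rcases mul_eq_zero.mp this with h | h
            · exact absurd h h0lam
            · exact h
          apply hp
          rw [hpc, hc0, Polynomial.C_0]
        · have hlt := Polynomial.natDegree_derivative_lt hdpos.ne'
          rw [hdp, Polynomial.natDegree_C_mul h0lam] at hlt
          exact lt_irrefl _ hlt
      apply hw0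
      funext i
      rw [hwp i, hp0]
      simp
  · -- condition (C)
    have e1 : H * (H⁻¹ * (δ • P)) = δ • P := by
      rw [← Matrix.mul_assoc, hHinv, Matrix.one_mul]
    have e2 : (H⁻¹ * (δ • P))ᵀ * H = δ • P := by
      rw [Matrix.transpose_mul, hinvsym, hS'T, Matrix.mul_assoc, hinvH, Matrix.mul_one]
    have hhalf : (2:ℝ)⁻¹ • (δ • P) + (2:ℝ)⁻¹ • (δ • P) = δ • P := by
      rw [← add_smul]; norm_num
    calc H * (Dp + (2:ℝ)⁻¹ • (H⁻¹ * (δ • P))) + (Dp + (2:ℝ)⁻¹ • (H⁻¹ * (δ • P)))ᵀ * H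
        = (H * Dp + Dpᵀ * H) + ((2:ℝ)⁻¹ • (δ • P) + (2:ℝ)⁻¹ • (δ • P)) := by
          rw [Matrix.mul_add, Matrix.transpose_add, Matrix.add_mul, Matrix.transpose_smul,
            Matrix.mul_smul, Matrix.smul_mul, e1, e2]
          abel
      _ = -(vecMulVec p0 p0) + vecMulVec pn pn + (S + δ • P) := by
          rw [hC, hhalf]; abel
  · -- condition (D)
    have e1 : H * (H⁻¹ * (δ • P)) = δ • P := by
      rw [← Matrix.mul_assoc, hHinv, Matrix.one_mul]
    have e2 : (H⁻¹ * (δ • P))ᵀ * H = δ • P := by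
      rw [Matrix.transpose_mul, hinvsym, hS'T, Matrix.mul_assoc, hinvH, Matrix.mul_one]
    calc H * (Dp + (2:ℝ)⁻¹ • (H⁻¹ * (δ • P))) + (Dm - (2:ℝ)⁻¹ • (H⁻¹ * (δ • P)))ᵀ * H
        = (H * Dp + Dmᵀ * H) + ((2:ℝ)⁻¹ • (δ • P) - (2:ℝ)⁻¹ • (δ • P)) := by
          rw [Matrix.mul_add, Matrix.transpose_sub, Matrix.sub_mul, Matrix.transpose_smul,
            Matrix.mul_smul, Matrix.smul_mul, e1, e2]
          abel
      _ = -(vecMulVec p0 p0) + vecMulVec pn pn := by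
          rw [hD2]; abel
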